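/- For any reversal applied to a signed permutation, the number of cycles in the breakpoint graph changes by at most 1, i.e., Δc(ρ) ≤ 1. -/

import Mathlib

/-- The alternating cycles of the breakpoint graph of a black perfect matching `b`
and a gray perfect matching `g` (both fixed-point-free involutions). -/
def altCycleSetoid {V : Type*} (b g : Equiv.Perm V) : Setoid V :=
  Relation.EqvGen.setoid (fun v w => b v = w ∨ g v = w)

/-- The number of alternating cycles of the breakpoint graph. -/
noncomputable def numAltCycles {V : Type*} (b g : Equiv.Perm V) : ℕ :=
  Nat.card (Quotient (altCycleSetoid b g))

/-- For any reversal applied to a signed permutation, the number of cycles of the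
breakpoint graph changes by at most 1: a reversal replaces exactly two black edges
(on a set `D` of four endpoints) by two new black edges on the same endpoints,
leaving the gray matching `g` untouched, and then
`Δc = numAltCycles b' g - numAltCycles b g ≤ 1`. -/
theorem stmt2 {V : Type*} [Fintype V] [DecidableEq V]
    (b b' g : Equiv.Perm V)
    (hb1 : ∀ v, b v ≠ v) (hb2 : ∀ v, b (b v) = v)
    (hb'1 : ∀ v, b' v ≠ v) (hb'2 : ∀ v, b' (b' v) = v)
    (hg1 : ∀ v, g v ≠ v) (hg2 : ∀ v, g (g v) = v)
    (D : Finset V) (hD : D.card = 4)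
    (hbD : ∀ v ∈ D, b v ∈ D) (hb'D : ∀ v ∈ D, b' v ∈ D)
    (hsame : ∀ v ∉ D, b' v = b v) :
    numAltCycles b' g ≤ numAltCycles b g + 1 := by
  classical
  set r : V → V → Prop := fun v w => b v = w ∨ g v = w with hr
  set r' : V → V → Prop := fun v w => b' v = w ∨ g v = w with hr'
  set R : V → V → Prop := fun v w => b v = w ∨ b' v = w ∨ g v = w with hR
  -- the combined quotient
  let sR : Setoid V := Relation.EqvGen.setoid R
  -- key structure lemma
  have key : ∀ x y, Relation.EqvGen R x y →
      Relation.EqvGen r' x y ∨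
      ((∃ d ∈ D, Relation.EqvGen r' x d) ∧ (∃ d ∈ D, Relation.EqvGen r' y d)) := by
    intro x y h
    induction h with
    | rel x y hxy =>
      rcases hxy with h1 | h2 | h3
      · by_cases hxD : x ∈ D
        · right
          exact ⟨⟨x, hxD, Relation.EqvGen.refl x⟩,
                 ⟨y, h1 ▸ hbD x hxD, Relation.EqvGen.refl y⟩⟩
        · left
          exact Relation.EqvGen.rel _ _ (Or.inl (by rw [hsame x hxD]; exact h1))
      · left; exact Relation.EqvGen.rel _ _ (Or.inl h2)
      · left; exact Relation.EqvGen.rel _ _ (Or.inr h3)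
    | refl x => left; exact Relation.EqvGen.refl x
    | symm x y _ ih =>
      rcases ih with h | ⟨h1, h2⟩
      · left; exact Relation.EqvGen.symm _ _ h
      · right; exact ⟨h2, h1⟩
    | trans x y z _ _ ih1 ih2 =>
      rcases ih1 with h1 | ⟨⟨d1, hd1, hx1⟩, ⟨d2, hd2, hy1⟩⟩ <;>
        rcases ih2 with h2 | ⟨⟨d3, hd3, hy2⟩, ⟨d4, hd4, hz2⟩⟩
      · left; exact Relation.EqvGen.trans _ _ _ h1 h2
      · right; exact ⟨⟨d3, hd3, Relation.EqvGen.trans _ _ _ h1 hy2⟩, ⟨d4, hd4, hz2⟩⟩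
      · right
        exact ⟨⟨d1, hd1, hx1⟩,
               ⟨d2, hd2, Relation.EqvGen.trans _ _ _ (Relation.EqvGen.symm _ _ h2) hy1⟩⟩
      · right; exact ⟨⟨d1, hd1, hx1⟩, ⟨d4, hd4, hz2⟩⟩
  -- structure of D
  have hDpos : 0 < D.card := by rw [hD]; norm_num
  obtain ⟨x₀, hx₀⟩ := Finset.card_pos.mp hDpos
  have hbx₀ : b' x₀ ∈ D := hb'D x₀ hx₀
  have hne1 : b' x₀ ≠ x₀ := hb'1 x₀
  have hcard2 : 2 ≤ (D \ {x₀, b' x₀}).card := by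
    have : ({x₀, b' x₀} : Finset V).card ≤ 2 := Finset.card_insert_le _ _ |>.trans (by simp)
    have h := Finset.le_card_sdiff ({x₀, b' x₀} : Finset V) D
    omega
  obtain ⟨y₀, hy₀⟩ := Finset.card_pos.mp (by omega : 0 < (D \ {x₀, b' x₀}).card)
  have hy₀D : y₀ ∈ D := (Finset.mem_sdiff.mp hy₀).1
  have hy₀ne : y₀ ≠ x₀ ∧ y₀ ≠ b' x₀ := by
    have := (Finset.mem_sdiff.mp hy₀).2
    simp at this; exact this
  have hby₀D : b' y₀ ∈ D := hb'D y₀ hy₀D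
  -- D = {x₀, b' x₀, y₀, b' y₀}
  have hbyne : b' y₀ ≠ y₀ := hb'1 y₀
  have hbyne1 : b' y₀ ≠ x₀ := by
    intro h; apply hy₀ne.2; rw [← h, hb'2]
  have hbyne2 : b' y₀ ≠ b' x₀ := by
    intro h; apply hy₀ne.1
    have := congrArg b' h; rwa [hb'2, hb'2] at this
  have hSD : ({x₀, b' x₀, y₀, b' y₀} : Finset V) = D := by
    apply Finset.eq_of_subset_of_card_le
    · intro z hz
      simp only [Finset.mem_insert, Finset.mem_singleton] at hz
      rcases hz with rfl | rfl | rfl | rfl <;> assumption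
    · rw [hD]
      rw [Finset.card_insert_of_notMem (by simp [hne1.symm, hy₀ne.1.symm, hbyne1.symm]),
          Finset.card_insert_of_notMem (by simp [hy₀ne.2.symm, hbyne2.symm]),
          Finset.card_insert_of_notMem (by simp [hbyne.symm])]
      simp
  have Dcover : ∀ d ∈ D, Relation.EqvGen r' d x₀ ∨ Relation.EqvGen r' d y₀ := by
    intro d hd
    rw [← hSD] at hd
    simp only [Finset.mem_insert, Finset.mem_singleton] at hd
    rcases hd with rfl | rfl | rfl | rfl
    · exact Or.inl (Relation.EqvGen.refl _)
    · exact Or.inl (Relation.EqvGen.symm _ _ (Relation.EqvGen.rel _ _ (Or.inl rfl)))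
    · exact Or.inr (Relation.EqvGen.refl _)
    · exact Or.inr (Relation.EqvGen.symm _ _ (Relation.EqvGen.rel _ _ (Or.inl rfl)))
  -- maps between quotients
  have mono_r : ∀ x y, Relation.EqvGen r x y → Relation.EqvGen R x y := by
    intro x y h
    refine Relation.EqvGen.mono ?_ _ _ h
    intro a c hac
    rcases hac with h | h
    · exact Or.inl h
    · exact Or.inr (Or.inr h)
  have mono_r' : ∀ x y, Relation.EqvGen r' x y → Relation.EqvGen R x y := by
    intro x y h
    refine Relation.EqvGen.mono ?_ _ _ h
    intro a c hac
    rcases hac with h | h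
    · exact Or.inr (Or.inl h)
    · exact Or.inr (Or.inr h)
  let φ : Quotient (altCycleSetoid b g) → Quotient sR :=
    Quotient.map' id (fun a c h => mono_r a c h)
  have hφsurj : Function.Surjective φ := by
    intro q
    induction q using Quotient.ind with
    | _ x => exact ⟨Quotient.mk'' x, rfl⟩
  let ψ : Quotient (altCycleSetoid b' g) → Quotient sR :=
    Quotient.map' id (fun a c h => mono_r' a c h)
  let f : Quotient (altCycleSetoid b' g) → Option (Quotient sR) :=
    fun c => if c = Quotient.mk'' x₀ then none else some (ψ c)
  have hfinj : Function.Injective f := by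
    intro c d hcd
    by_cases hc : c = Quotient.mk'' x₀ <;> by_cases hd : d = Quotient.mk'' x₀
    · rw [hc, hd]
    · simp only [f, if_pos hc, if_neg hd] at hcd
      cases hcd
    · simp only [f, if_pos hd, if_neg hc] at hcd
      cases hcd
    · simp only [f, if_neg hc, if_neg hd, Option.some.injEq] at hcd
      induction c using Quotient.ind with
      | _ x =>
      induction d using Quotient.ind with
      | _ y =>
      have hxy : Relation.EqvGen R x y := Quotient.exact' hcd
      rcases key x y hxy with h | ⟨⟨d1, hd1, hx1⟩, ⟨d2, hd2, hy1⟩⟩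
      · exact Quotient.sound' h
      · rcases Dcover d1 hd1 with h1 | h1
        · exact absurd (Quotient.sound' (Relation.EqvGen.trans _ _ _ hx1 h1)) hc
        · rcases Dcover d2 hd2 with h2 | h2
          · exact absurd (Quotient.sound' (Relation.EqvGen.trans _ _ _ hy1 h2)) hd
          · refine Quotient.sound' ?_
            exact Relation.EqvGen.trans _ _ _ (Relation.EqvGen.trans _ _ _ hx1 h1)
              (Relation.EqvGen.symm _ _ (Relation.EqvGen.trans _ _ _ hy1 h2))
  have h1 : Nat.card (Quotient sR) ≤ numAltCycles b g :=
    Nat.card_le_card_of_surjective φ hφsurj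
  have h2 : numAltCycles b' g ≤ Nat.card (Quotient sR) + 1 := by
    have hle := Nat.card_le_card_of_injective f hfinj
    haveI : Fintype (Quotient sR) := Fintype.ofFinite _
    have hopt : Nat.card (Option (Quotient sR)) = Nat.card (Quotient sR) + 1 := by
      simp [Nat.card_eq_fintype_card]
    rw [hopt] at hle
    exact hle
  omega
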